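/- Let k be a field, V a nonzero k-vector space, and R a unital k-subalgebra of End_k(V). Then R is triangularizable if and only if R is contained in a unital k-subalgebra A of End_k(V) such that A/rad(A) is isomorphic to k^Ω as topological k-algebras for some set Ω (with A carrying the subspace topology from the function topology, A/rad(A) the quotient topology, and k^Ω the product topology with k discrete), and rad(A) is topologically nilpotent as a set. Moreover, if such an A exists and R is closed in the function topology, then rad(R) = R ∩ rad(A). -/

import Mathlib

set_option maxHeartbeats 1000000
set_option synthInstance.maxHeartbeats 400000
set_option linter.unusedSectionVars false
set_option linter.unusedVariables false


universe u v

variable {k : Type u} [Field k]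

/-- The function (finite/pointwise) topology on `End_k(V)`: the topology induced from the
product topology on `V → V` where `V` carries the discrete topology. -/
instance endFunctionTopology {V : Type v} [AddCommGroup V] [Module k V] :
    TopologicalSpace (Module.End k V) :=
  TopologicalSpace.induced (fun T => (T : V → V))
    (@Pi.topologicalSpace V (fun _ => V) (fun _ => ⊥))

/-- The product topology on `Ω → k` where each factor `k` is discrete. -/
def discretePiTopology (Ω K : Type*) : TopologicalSpace (Ω → K) :=
  @Pi.topologicalSpace Ω (fun _ => K) (fun _ => ⊥)

/-- `seqProd f n = f (n-1) * ⋯ * f 1 * f 0`, the composition `Tₙ ⋯ T₂ T₁` of the first `n`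
terms of the sequence `f` (and the identity for `n = 0`). -/
def seqProd {V : Type v} [AddCommGroup V] [Module k V]
    (f : ℕ → Module.End k V) : ℕ → Module.End k V
  | 0 => 1
  | n + 1 => f n * seqProd f n

/-- A subset `X ⊆ End_k(V)` is topologically nilpotent if for every sequence of elements of
`X` and every finite-dimensional subspace `W` of `V`, some initial composition
`Tₙ ⋯ T₂ T₁` annihilates `W`. -/
def IsTopNilpotentSet {V : Type v} [AddCommGroup V] [Module k V]
    (X : Set (Module.End k V)) : Prop :=
  ∀ f : ℕ → Module.End k V, (∀ n, f n ∈ X) →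
    ∀ W : Submodule k V, FiniteDimensional k ↥W →
      ∃ n : ℕ, 0 < n ∧ ∀ w ∈ W, seqProd f n w = 0

/-- `A/rad(A) ≅ k^Ω` as topological `k`-algebras (for some set `Ω`), witnessed by a
surjective, continuous, open `k`-algebra homomorphism `A → k^Ω` whose kernel is the
Jacobson radical `rad(A) = Ideal.jacobson ⊥` (the intersection of the maximal left
ideals), together with the topological nilpotence of `rad(A)`. -/
def GoodAlgebra {V : Type v} [AddCommGroup V] [Module k V]
    (A : Subalgebra k (Module.End k V)) : Prop :=
  (∃ (Ω : Type v) (φ : A →ₐ[k] (Ω → k)), Function.Surjective ⇑φ ∧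
    (∀ x : A, φ x = 0 ↔ x ∈ Ideal.jacobson (⊥ : Ideal A)) ∧
    (@Continuous ↥A (Ω → k) inferInstance (discretePiTopology Ω k) ⇑φ) ∧
    (@IsOpenMap ↥A (Ω → k) inferInstance (discretePiTopology Ω k) ⇑φ)) ∧
  IsTopNilpotentSet {T : Module.End k V |
    ∃ y : A, y ∈ Ideal.jacobson (⊥ : Ideal A) ∧ (y : Module.End k V) = T}


section Top

variable {V : Type v} [AddCommGroup V] [Module k V]

theorem nbhd_basis_end {O : Set (Module.End k V)} (hO : IsOpen O) {a₀ : Module.End k V}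
    (ha₀ : a₀ ∈ O) : ∃ I : Finset V, {a : Module.End k V | ∀ v ∈ I, a v = a₀ v} ⊆ O := by
  letI : TopologicalSpace V := ⊥
  obtain ⟨O₂, hO₂, rfl⟩ := isOpen_induced_iff.1 hO
  obtain ⟨I, u, hu, hsub⟩ := isOpen_pi_iff.1 hO₂ _ ha₀
  refine ⟨I, fun a ha => hsub fun v hv => ?_⟩
  show a v ∈ u v
  rw [ha v hv]
  exact (hu v hv).2

theorem nbhd_basis_sub {p : Module.End k V → Prop} {O : Set {x // p x}} (hO : IsOpen O)
    {a₀ : {x // p x}} (ha₀ : a₀ ∈ O) :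
    ∃ I : Finset V,
      {a : {x // p x} | ∀ v ∈ I, (a : Module.End k V) v = (a₀ : Module.End k V) v} ⊆ O := by
  obtain ⟨O₁, hO₁, rfl⟩ := isOpen_induced_iff.1 hO
  obtain ⟨I, hI⟩ := nbhd_basis_end hO₁ ha₀
  exact ⟨I, fun a ha => hI fun v hv => ha v hv⟩

theorem basic_open_end (I : Finset V) (a₀ : Module.End k V) :
    IsOpen {a : Module.End k V | ∀ v ∈ I, a v = a₀ v} := by
  letI : TopologicalSpace V := ⊥
  haveI : DiscreteTopology V := ⟨rfl⟩
  rw [isOpen_induced_iff]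
  refine ⟨(I : Set V).pi (fun v => {a₀ v}), ?_, by ext a; simp [Set.mem_pi]⟩
  exact isOpen_set_pi I.finite_toSet fun v _ => isOpen_discrete _

theorem basic_open_sub (p : Module.End k V → Prop) (I : Finset V) (a₀ : Module.End k V) :
    IsOpen {a : {x // p x} | ∀ v ∈ I, (a : Module.End k V) v = a₀ v} :=
  (basic_open_end I a₀).preimage continuous_subtype_val

theorem closed_eval_mem (p : Module.End k V → Prop) (v : V) (U : Set V) :
    IsClosed {a : {x // p x} | (a : Module.End k V) v ∈ U} := by
  letI : TopologicalSpace V := ⊥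
  haveI : DiscreteTopology V := ⟨rfl⟩
  rw [← isOpen_compl_iff]
  have h : ({a : {x // p x} | (a : Module.End k V) v ∈ U})ᶜ
      = {a : {x // p x} | (a : Module.End k V) v ∈ Uᶜ} := by
    ext a; simp
  rw [h]
  have hev : Continuous (fun a : {x // p x} => (a : Module.End k V) v) :=
    (show Continuous (fun T : Module.End k V => T v) from
      (continuous_apply v).comp continuous_induced_dom).comp continuous_subtype_val
  exact (isOpen_discrete Uᶜ).preimage hev

theorem continuous_eval_sub (p : Module.End k V → Prop) (v : V) :
    @Continuous {x // p x} V _ ⊥ (fun a : {x // p x} => (a : Module.End k V) v) := by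
  letI : TopologicalSpace V := ⊥
  exact (show Continuous (fun T : Module.End k V => T v) from
      (continuous_apply v).comp continuous_induced_dom).comp continuous_subtype_val

omit [Field k] in
theorem nbhd_basis_pi {Ω : Type*} {O : Set (Ω → k)} (hO : @IsOpen _ (discretePiTopology Ω k) O)
    {g₀ : Ω → k} (hg₀ : g₀ ∈ O) : ∃ F : Finset Ω, {g : Ω → k | ∀ ω ∈ F, g ω = g₀ ω} ⊆ O := by
  letI : TopologicalSpace k := ⊥
  obtain ⟨F, u, hu, hsub⟩ := isOpen_pi_iff.1 hO _ hg₀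
  refine ⟨F, fun g hg => hsub fun ω hω => ?_⟩
  show g ω ∈ u ω
  rw [hg ω hω]
  exact (hu ω hω).2

omit [Field k] in
theorem basic_open_pi {Ω : Type*} (F : Finset Ω) (g₀ : Ω → k) :
    @IsOpen _ (discretePiTopology Ω k) {g : Ω → k | ∀ ω ∈ F, g ω = g₀ ω} := by
  letI : TopologicalSpace k := ⊥
  haveI : DiscreteTopology k := ⟨rfl⟩
  have h : {g : Ω → k | ∀ ω ∈ F, g ω = g₀ ω} = (F : Set Ω).pi (fun ω => {g₀ ω}) := by
    ext g; simp [Set.mem_pi]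
  rw [h]
  exact isOpen_set_pi F.finite_toSet fun ω _ => isOpen_discrete _

end Top

section Tri

variable {V : Type v} [AddCommGroup V] [Module k V] {ι : Type v} [LinearOrder ι]

open Submodule

/-- The subalgebra of transformations triangular with respect to a given ordered basis. -/
def triA (b : Module.Basis ι k V) : Subalgebra k (Module.End k V) where
  carrier := {T | ∀ i, T (b i) ∈ span k (⇑b '' {j | j ≤ i})}
  add_mem' {T S} hT hS i := by
    simpa using add_mem (hT i) (hS i)
  mul_mem' {T S} hT hS i := by
    show T (S (b i)) ∈ _
    have key : ∀ x ∈ span k (⇑b '' {j | j ≤ i}), T x ∈ span k (⇑b '' {j | j ≤ i}) := by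
      intro x hx
      induction hx using span_induction with
      | mem x hx =>
        obtain ⟨j, hj, rfl⟩ := hx
        exact span_mono (Set.image_mono fun l (hl : l ≤ j) => le_trans hl hj) (hT j)
      | zero => simp
      | add x y _ _ hx hy => simpa using add_mem hx hy
      | smul c x _ hx => simpa using smul_mem _ c hx
    exact key _ (hS i)
  algebraMap_mem' c i := by
    show c • b i ∈ _
    exact smul_mem _ _ (subset_span ⟨i, le_refl i, rfl⟩)

theorem mem_triA_iff {b : Module.Basis ι k V} {T : Module.End k V} :
    T ∈ triA b ↔ ∀ i, T (b i) ∈ span k (⇑b '' {j | j ≤ i}) := Iff.rfl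

theorem triA_repr_support {b : Module.Basis ι k V} {T : Module.End k V} (hT : T ∈ triA b) (i : ι) :
    ∀ l, ¬ l ≤ i → b.repr (T (b i)) l = 0 := by
  intro l hl
  have := (b.mem_span_image).1 (hT i)
  by_contra h
  exact hl (this (Finsupp.mem_support_iff.2 h))

/-- The diagonal algebra homomorphism from the triangular algebra to `ι → k`. -/
noncomputable def diagHom (b : Module.Basis ι k V) : triA b →ₐ[k] (ι → k) where
  toFun T i := b.repr (T.1 (b i)) i
  map_one' := by funext i; simp [Module.Basis.repr_self]
  map_zero' := by funext i; simp
  map_add' T S := by funext i; simp [LinearMap.add_apply]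
  map_mul' T S := by
    funext i
    show b.repr (T.1 (S.1 (b i))) i = _
    have hS := S.2 i
    -- expand S.1 (b i) in the basis
    conv_lhs => rw [← b.linearCombination_repr (S.1 (b i)), Finsupp.linearCombination_apply]
    rw [map_finsuppSum T.1, map_finsuppSum (b.repr), Finsupp.sum_apply]
    rw [Finsupp.sum_eq_single i ?h₀ ?h₁]
    · simp [mul_comm]
    case h₀ =>
      intro j hj hji
      have hj' : j ≤ i := (b.mem_span_image).1 (S.2 i) (Finsupp.mem_support_iff.2 hj)
      have : ¬ i ≤ j := fun h => hji (le_antisymm hj' h)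
      simp [triA_repr_support T.2 j i this]
    case h₁ => simp
  commutes' c := by
    funext i
    show b.repr ((algebraMap k (Module.End k V) c) (b i)) i = _
    simp [Module.algebraMap_end_apply, Module.Basis.repr_self]

theorem diagHom_apply (b : Module.Basis ι k V) (T : triA b) (i : ι) :
    diagHom b T i = b.repr (T.1 (b i)) i := rfl

/-- The diagonal transformation associated with `d : ι → k`. -/
noncomputable def diagT (b : Module.Basis ι k V) (d : ι → k) : Module.End k V :=
  b.constr k (fun i => d i • b i)

theorem diagT_mem (b : Module.Basis ι k V) (d : ι → k) : diagT b d ∈ triA b := by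
  intro i
  rw [diagT, b.constr_basis]
  exact smul_mem _ _ (subset_span ⟨i, le_refl i, rfl⟩)

theorem diagHom_diagT (b : Module.Basis ι k V) (d : ι → k) :
    diagHom b ⟨diagT b d, diagT_mem b d⟩ = d := by
  funext i
  rw [diagHom_apply]
  show b.repr ((diagT b d) (b i)) i = d i
  rw [diagT, b.constr_basis]
  simp [Module.Basis.repr_self]

theorem diagHom_surjective (b : Module.Basis ι k V) : Function.Surjective (diagHom b) :=
  fun d => ⟨⟨diagT b d, diagT_mem b d⟩, diagHom_diagT b d⟩

end Tri

section TriKer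

variable {V : Type v} [AddCommGroup V] [Module k V] {ι : Type v} [LinearOrder ι]

open Submodule

/-- Strictly triangular transformations. -/
def strictTri (b : Module.Basis ι k V) (T : Module.End k V) : Prop :=
  ∀ i, T (b i) ∈ span k (⇑b '' {j | j < i})

theorem strictTri_mem_triA {b : Module.Basis ι k V} {T : Module.End k V} (hT : strictTri b T) :
    T ∈ triA b := fun i =>
  span_mono (Set.image_mono fun l (hl : l < i) => le_of_lt hl) (hT i)

theorem diagHom_eq_zero_iff {b : Module.Basis ι k V} {T : triA b} :
    diagHom b T = 0 ↔ strictTri b T.1 := by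
  constructor
  · intro h i
    rw [b.mem_span_image]
    intro l hl
    have hl' : l ≤ i := (b.mem_span_image).1 (T.2 i) hl
    rcases lt_or_eq_of_le hl' with h' | rfl
    · exact h'
    · exfalso
      have : diagHom b T l = 0 := by rw [h]; rfl
      rw [diagHom_apply] at this
      exact Finsupp.mem_support_iff.1 hl this
  · intro h
    funext i
    rw [diagHom_apply]
    show b.repr (T.1 (b i)) i = (0 : ι → k) i
    have := (b.mem_span_image).1 (h i)
    by_cases hi : i ∈ (b.repr (T.1 (b i))).support
    · exact absurd (this hi) (lt_irrefl i)
    · simpa using Finsupp.notMem_support_iff.1 hi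

theorem strict_nilpotent_basis (wf : WellFounded ((· < ·) : ι → ι → Prop)) {b : Module.Basis ι k V}
    {n : Module.End k V} (hn : strictTri b n) (i : ι) :
    ∃ m, ∀ m' ≥ m, (n ^ m') (b i) = 0 := by
  induction i using WellFounded.induction wf with
  | _ i IH =>
  have hsupp : ↑(b.repr (n (b i))).support ⊆ {j | j < i} := (b.mem_span_image).1 (hn i)
  choose g hg using (fun j (hj : j ∈ (b.repr (n (b i))).support) => IH j (hsupp hj))
  refine ⟨((b.repr (n (b i))).support.attach.sup fun p => g p.1 p.2) + 1, fun m' hm' => ?_⟩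
  obtain ⟨e, rfl⟩ : ∃ e, m' = e + 1 := ⟨m' - 1, by omega⟩
  have hge : ((b.repr (n (b i))).support.attach.sup fun p => g p.1 p.2) ≤ e := by omega
  have he : ∀ j, ∀ hj : j ∈ (b.repr (n (b i))).support, (n ^ e) (b j) = 0 := by
    intro j hj
    have h1 : g j hj ≤ (b.repr (n (b i))).support.attach.sup fun p => g p.1 p.2 :=
      Finset.le_sup (f := fun p : {x : ι // x ∈ (b.repr (n (b i))).support} => g p.1 p.2)
        (Finset.mem_attach _ ⟨j, hj⟩)
    exact hg j hj e (le_trans h1 hge)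
  rw [pow_succ, Module.End.mul_apply]
  conv_lhs => rw [← b.linearCombination_repr (n (b i)), Finsupp.linearCombination_apply]
  rw [map_finsuppSum, Finsupp.sum]
  refine Finset.sum_eq_zero fun j hj => ?_
  rw [LinearMap.map_smul, he j hj, smul_zero]

theorem strict_nilpotent (wf : WellFounded ((· < ·) : ι → ι → Prop)) {b : Module.Basis ι k V}
    {n : Module.End k V} (hn : strictTri b n) (v : V) :
    ∃ m, ∀ m' ≥ m, (n ^ m') v = 0 := by
  have h1 : ∀ j ∈ (b.repr v).support, ∃ m, ∀ m' ≥ m, (n ^ m') (b j) = 0 :=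
    fun j _ => strict_nilpotent_basis wf hn j
  choose g hg using h1
  refine ⟨(b.repr v).support.attach.sup fun j => g j.1 j.2, fun m' hm' => ?_⟩
  conv_lhs => rw [← b.linearCombination_repr v, Finsupp.linearCombination_apply]
  rw [map_finsuppSum, Finsupp.sum]
  refine Finset.sum_eq_zero fun j hj => ?_
  have h1 : g j hj ≤ (b.repr v).support.attach.sup fun p => g p.1 p.2 :=
    Finset.le_sup (f := fun p : {x : ι // x ∈ (b.repr v).support} => g p.1 p.2)
      (Finset.mem_attach _ ⟨j, hj⟩)
  have hle : g j hj ≤ m' := le_trans h1 hm'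
  rw [LinearMap.map_smul, hg j hj m' hle, smul_zero]

theorem isUnit_one_sub (wf : WellFounded ((· < ·) : ι → ι → Prop)) {b : Module.Basis ι k V}
    (x : triA b) (hx : diagHom b x = 0) : IsUnit (1 - x) := by
  have hst : strictTri b x.1 := diagHom_eq_zero_iff.1 hx
  set n : Module.End k V := x.1 with hndef
  choose N hN using strict_nilpotent wf hst
  set S : Module.End k V := b.constr k (fun i => ∑ m ∈ Finset.range (N (b i)), (n ^ m) (b i))
    with hSdef
  have hSb : ∀ (i : ι), ∀ M ≥ N (b i), S (b i) = (∑ m ∈ Finset.range M, n ^ m) (b i) := by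
    intro i M hM
    rw [hSdef, b.constr_basis, LinearMap.coe_sum, Finset.sum_apply]
    refine Finset.sum_subset (Finset.range_subset_range.2 hM) fun m _ hm => ?_
    exact hN (b i) m (by simpa using hm)
  have geom1 : ∀ M : ℕ, (1 - n) * (∑ m ∈ Finset.range M, n ^ m) = 1 - n ^ M := by
    intro M
    have h := mul_geom_sum n M
    rw [show (1 : Module.End k V) - n = -(n - 1) by rw [neg_sub], neg_mul, h, neg_sub]
  have geom2 : ∀ M : ℕ, (∑ m ∈ Finset.range M, n ^ m) * (1 - n) = 1 - n ^ M := by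
    intro M
    have h := geom_sum_mul n M
    rw [show (1 : Module.End k V) - n = -(n - 1) by rw [neg_sub], mul_neg, h, neg_sub]
  have hStri : S ∈ triA b := by
    intro i
    rw [hSdef, b.constr_basis]
    have key : ∀ y ∈ span k (⇑b '' {j | j ≤ i}), n y ∈ span k (⇑b '' {j | j ≤ i}) := by
      intro y hy
      induction hy using span_induction with
      | mem y hy =>
        obtain ⟨j, hj, rfl⟩ := hy
        exact span_mono (Set.image_mono fun l (hl : l ≤ j) => le_trans hl hj)
          (strictTri_mem_triA hst j)
      | zero => simp
      | add y z _ _ hy hz => simpa using add_mem hy hz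
      | smul c y _ hy => simpa using smul_mem _ c hy
    have hpow : ∀ m : ℕ, (n ^ m) (b i) ∈ span k (⇑b '' {j | j ≤ i}) := by
      intro m
      induction m with
      | zero => exact subset_span ⟨i, le_refl i, rfl⟩
      | succ m IHm =>
        rw [pow_succ', Module.End.mul_apply]
        exact key _ IHm
    exact Submodule.sum_mem _ fun m _ => hpow m
  have h1 : (1 - n) * S = 1 := by
    refine b.ext fun i => ?_
    show (1 - n) (S (b i)) = b i
    rw [hSb i (N (b i)) (le_refl _)]
    have : (1 - n) ((∑ m ∈ Finset.range (N (b i)), n ^ m) (b i))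
        = ((1 - n) * (∑ m ∈ Finset.range (N (b i)), n ^ m)) (b i) := rfl
    rw [this, geom1]
    simp [hN (b i) (N (b i)) (le_refl _)]
  have h2 : S * (1 - n) = 1 := by
    refine b.ext fun i => ?_
    obtain ⟨M, hM1, hM2⟩ : ∃ M, (∀ j ∈ (b.repr (n (b i))).support, N (b j) ≤ M) ∧
        N (b i) ≤ M := by
      refine ⟨((b.repr (n (b i))).support.sup fun j => N (b j)) + N (b i), fun j hj => ?_,
        Nat.le_add_left _ _⟩
      have h1 : N (b j) ≤ (b.repr (n (b i))).support.sup fun j => N (b j) :=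
        Finset.le_sup (f := fun j : ι => N (b j)) hj
      omega
    have hSnb : S (n (b i)) = (∑ m ∈ Finset.range M, n ^ m) (n (b i)) := by
      conv_lhs => rw [← b.linearCombination_repr (n (b i)), Finsupp.linearCombination_apply]
      conv_rhs => rw [← b.linearCombination_repr (n (b i)), Finsupp.linearCombination_apply]
      rw [map_finsuppSum, map_finsuppSum]
      refine Finsupp.sum_congr fun j hj => ?_
      rw [LinearMap.map_smul, LinearMap.map_smul, hSb j M (hM1 j hj)]
    show S ((1 - n) (b i)) = b i
    have hexp : (1 - n) (b i) = b i - n (b i) := by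
      simp [LinearMap.sub_apply]
    rw [hexp, map_sub, hSnb, hSb i M hM2]
    have : (∑ m ∈ Finset.range M, n ^ m) (b i) - (∑ m ∈ Finset.range M, n ^ m) (n (b i))
        = ((∑ m ∈ Finset.range M, n ^ m) * (1 - n)) (b i) := by
      show _ = (∑ m ∈ Finset.range M, n ^ m) ((1 - n) (b i))
      rw [hexp, map_sub]
    rw [this, geom2]
    have hnM : (n ^ M) (b i) = 0 := hN (b i) M hM2
    simp [hnM]
  refine ⟨⟨1 - x, ⟨S, hStri⟩, ?_, ?_⟩, rfl⟩
  · exact Subtype.ext h1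
  · exact Subtype.ext h2

theorem ker_le_jacobson (wf : WellFounded ((· < ·) : ι → ι → Prop)) {b : Module.Basis ι k V}
    (x : triA b) (hx : diagHom b x = 0) : x ∈ Ideal.jacobson (⊥ : Ideal (triA b)) := by
  rw [Ideal.jacobson]
  rw [Submodule.mem_sInf]
  rintro m ⟨-, hm⟩
  by_contra hxm
  have hlt : m < m ⊔ Ideal.span {x} := by
    refine lt_of_le_of_ne le_sup_left fun h => hxm ?_
    rw [h]
    exact Submodule.mem_sup_right (Ideal.mem_span_singleton_self x)
  have htop : m ⊔ Ideal.span {x} = ⊤ := hm.1.2 _ hlt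
  have h1 : (1 : triA b) ∈ m ⊔ Ideal.span {x} := htop ▸ trivial
  obtain ⟨u, hu, w, hw, huw⟩ := Submodule.mem_sup.1 h1
  obtain ⟨a, rfl⟩ := Ideal.mem_span_singleton'.1 hw
  have hax : diagHom b (a * x) = 0 := by rw [map_mul, hx, mul_zero]
  have hu1 : u = 1 - a * x := by rw [← huw]; exact (add_sub_cancel_right u (a * x)).symm
  have : IsUnit u := hu1 ▸ isUnit_one_sub wf (a * x) hax
  exact hm.1.1 (Ideal.eq_top_of_isUnit_mem m hu this)

theorem jacobson_le_ker {b : Module.Basis ι k V}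
    (x : triA b) (hx : x ∈ Ideal.jacobson (⊥ : Ideal (triA b))) : diagHom b x = 0 := by
  funext i
  let ψ : triA b →ₐ[k] k := (Pi.evalAlgHom k (fun _ => k) i).comp (diagHom b)
  let m : Ideal (triA b) :=
    { carrier := {a | ψ a = 0}
      add_mem' := fun {p q} hp hq => by
        show ψ (p + q) = 0
        rw [map_add, hp, hq, add_zero]
      zero_mem' := by show ψ 0 = 0; rw [map_zero]
      smul_mem' := fun c a ha => by
        show ψ (c * a) = 0
        rw [map_mul, ha, mul_zero] }
  have hmem : ∀ a : triA b, a ∈ m ↔ ψ a = 0 := fun a => Iff.rfl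
  have hmax : m.IsMaximal := by
    constructor
    constructor
    · intro h
      have : (1 : triA b) ∈ m := h ▸ trivial
      rw [hmem, map_one] at this
      exact one_ne_zero this
    · intro J hJ
      obtain ⟨a, haJ, ham⟩ := SetLike.exists_of_lt hJ
      have hψa : ψ a ≠ 0 := fun h => ham ((hmem a).2 h)
      rw [Ideal.eq_top_iff_one]
      have hsplit : (1 : triA b) = (1 - (ψ a)⁻¹ • a) + (ψ a)⁻¹ • a :=
        (sub_add_cancel 1 ((ψ a)⁻¹ • a)).symm
      rw [hsplit]
      refine Submodule.add_mem _ (hJ.le ?_) ?_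
      · rw [hmem]
        rw [map_sub, map_one, map_smul]
        rw [smul_eq_mul, inv_mul_cancel₀ hψa, sub_self]
      · rw [Algebra.smul_def, ← smul_eq_mul]
        exact Submodule.smul_mem _ _ haJ
  have hxmem : x ∈ m := by
    rw [Ideal.jacobson] at hx
    exact Submodule.mem_sInf.1 hx m ⟨bot_le, hmax⟩
  show diagHom b x i = (0 : ι → k) i
  rw [Pi.zero_apply]
  exact (hmem x).1 hxmem

end TriKer

section TriTop

variable {V : Type v} [AddCommGroup V] [Module k V] {ι : Type v} [LinearOrder ι]

open Submodule

theorem diagHom_continuous (b : Module.Basis ι k V) :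
    @Continuous (triA b) (ι → k) _ (discretePiTopology ι k) ⇑(diagHom b) := by
  letI : TopologicalSpace V := ⊥
  letI : TopologicalSpace k := ⊥
  haveI : DiscreteTopology V := ⟨rfl⟩
  haveI : DiscreteTopology k := ⟨rfl⟩
  have key : Continuous ⇑(diagHom b) := by
    refine continuous_pi fun i => ?_
    have h1 : Continuous (fun T : {x // x ∈ triA b} => (T : Module.End k V) (b i)) :=
      continuous_eval_sub (· ∈ triA b) (b i)
    exact Continuous.comp (continuous_of_discreteTopology (f := fun v : V => b.repr v i)) h1
  exact key

theorem diagT_eq_zero {b : Module.Basis ι k V} {d : ι → k} {v : V}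
    (h : ∀ j ∈ (b.repr v).support, d j = 0) : diagT b d v = 0 := by
  conv_lhs => rw [← b.linearCombination_repr v, Finsupp.linearCombination_apply]
  rw [map_finsuppSum, Finsupp.sum]
  refine Finset.sum_eq_zero fun j hj => ?_
  rw [LinearMap.map_smul, diagT, b.constr_basis, h j hj, zero_smul, smul_zero]

theorem diagHom_isOpenMap (b : Module.Basis ι k V) :
    @IsOpenMap (triA b) (ι → k) _ (discretePiTopology ι k) ⇑(diagHom b) := by
  intro O hO
  rw [@isOpen_iff_forall_mem_open _ (discretePiTopology ι k)]
  rintro g₀ ⟨T₀, hT₀O, rfl⟩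
  obtain ⟨I, hI⟩ := nbhd_basis_sub hO hT₀O
  set S : Finset ι := I.sup (fun v => (b.repr v).support) with hS
  refine ⟨{g : ι → k | ∀ i ∈ S, g i = diagHom b T₀ i}, ?_, basic_open_pi S _, fun i _ => rfl⟩
  intro g hg
  have hg' : ∀ i ∈ S, g i = diagHom b T₀ i := hg
  obtain ⟨d, hd⟩ : ∃ d : ι → k, ∀ i, d i = if i ∈ S then 0 else g i - diagHom b T₀ i :=
    ⟨fun i => if i ∈ S then 0 else g i - diagHom b T₀ i, fun _ => rfl⟩
  set T : triA b := T₀ + ⟨diagT b d, diagT_mem b d⟩ with hT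
  have hTB : T ∈ O := by
    refine hI fun v hv => ?_
    have hsupp : (b.repr v).support ⊆ S := Finset.le_sup (f := fun v => (b.repr v).support) hv
    have hDv : diagT b d v = 0 := diagT_eq_zero fun j hj => by
      rw [hd j, if_pos (hsupp hj)]
    show (T₀ : Module.End k V) v + diagT b d v = (T₀ : Module.End k V) v
    rw [hDv, add_zero]
  refine ⟨T, hTB, ?_⟩
  rw [hT, map_add]
  funext i
  have hD : diagHom b ⟨diagT b d, diagT_mem b d⟩ i = d i := by rw [diagHom_diagT b d]
  show diagHom b T₀ i + diagHom b ⟨diagT b d, diagT_mem b d⟩ i = g i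
  rw [hD, hd i]
  by_cases hiS : i ∈ S
  · rw [if_pos hiS, add_zero]; exact (hg' i hiS).symm
  · rw [if_neg hiS]; ring

end TriTop

section Nilp

variable {V : Type v} [AddCommGroup V] [Module k V] {ι : Type v} [LinearOrder ι]

open Submodule

theorem seqProd_succ (f : ℕ → Module.End k V) (n : ℕ) :
    seqProd f (n + 1) = f n * seqProd f n := rfl

theorem seqProd_zero_of_le {f : ℕ → Module.End k V} {v : V} {n m : ℕ} (h : n ≤ m)
    (hv : seqProd f n v = 0) : seqProd f m v = 0 := by
  induction m with
  | zero => exact (Nat.le_zero.1 h) ▸ hv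
  | succ m IH =>
    rcases Nat.lt_or_ge n (m + 1) with h' | h'
    · have h2 := IH (by omega)
      rw [seqProd_succ, Module.End.mul_apply, h2, map_zero]
    · have h3 : n = m + 1 := le_antisymm h h'
      exact h3 ▸ hv

theorem seqProd_shift (f : ℕ → Module.End k V) (n : ℕ) :
    seqProd f (n + 1) = seqProd (fun m => f (m + 1)) n * f 0 := by
  induction n with
  | zero =>
    show f 0 * 1 = 1 * f 0
    rw [one_mul, mul_one]
  | succ n IH =>
    rw [seqProd_succ, IH, seqProd_succ, ← mul_assoc]

theorem strict_seq_kill_basis (wf : WellFounded ((· < ·) : ι → ι → Prop)) {b : Module.Basis ι k V}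
    (j : ι) :
    ∀ f : ℕ → Module.End k V, (∀ n, strictTri b (f n)) →
      ∃ n, ∀ m ≥ n, seqProd f m (b j) = 0 := by
  induction j using WellFounded.induction wf with
  | _ j IH =>
  intro f hf
  have hsupp : ↑(b.repr (f 0 (b j))).support ⊆ {l | l < j} := (b.mem_span_image).1 (hf 0 j)
  choose g hg using (fun l (hl : l ∈ (b.repr (f 0 (b j))).support) =>
    IH l (hsupp hl) (fun m => f (m + 1)) (fun n => hf (n + 1)))
  refine ⟨((b.repr (f 0 (b j))).support.attach.sup fun p => g p.1 p.2) + 1, fun m hm => ?_⟩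
  obtain ⟨e, rfl⟩ : ∃ e, m = e + 1 := ⟨m - 1, by omega⟩
  rw [seqProd_shift, Module.End.mul_apply]
  conv_lhs => rw [← b.linearCombination_repr (f 0 (b j)), Finsupp.linearCombination_apply]
  rw [map_finsuppSum, Finsupp.sum]
  refine Finset.sum_eq_zero fun l hl => ?_
  have h1 : g l hl ≤ (b.repr (f 0 (b j))).support.attach.sup fun p => g p.1 p.2 :=
    Finset.le_sup (f := fun p : {x : ι // x ∈ (b.repr (f 0 (b j))).support} => g p.1 p.2)
      (Finset.mem_attach _ ⟨l, hl⟩)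
  have h2 : g l hl ≤ e := by omega
  rw [LinearMap.map_smul, hg l hl e h2, smul_zero]

theorem strict_seq_kill_vec (wf : WellFounded ((· < ·) : ι → ι → Prop)) {b : Module.Basis ι k V}
    (w : V) (f : ℕ → Module.End k V) (hf : ∀ n, strictTri b (f n)) :
    ∃ n, ∀ m ≥ n, seqProd f m w = 0 := by
  choose g hg using (fun l (hl : l ∈ (b.repr w).support) => strict_seq_kill_basis wf l f hf)
  refine ⟨(b.repr w).support.attach.sup fun p => g p.1 p.2, fun m hm => ?_⟩
  conv_lhs => rw [← b.linearCombination_repr w, Finsupp.linearCombination_apply]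
  rw [map_finsuppSum, Finsupp.sum]
  refine Finset.sum_eq_zero fun l hl => ?_
  have h1 : g l hl ≤ (b.repr w).support.attach.sup fun p => g p.1 p.2 :=
    Finset.le_sup (f := fun p : {x : ι // x ∈ (b.repr w).support} => g p.1 p.2)
      (Finset.mem_attach _ ⟨l, hl⟩)
  rw [LinearMap.map_smul, hg l hl m (le_trans h1 hm), smul_zero]

theorem strictTri_topNilpotent (wf : WellFounded ((· < ·) : ι → ι → Prop)) (b : Module.Basis ι k V) :
    IsTopNilpotentSet {T : Module.End k V |
      ∃ y : triA b, y ∈ Ideal.jacobson (⊥ : Ideal (triA b)) ∧ (y : Module.End k V) = T} := by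
  intro f hf W hW
  have hstrict : ∀ n, strictTri b (f n) := by
    intro n
    obtain ⟨y, hy, hyf⟩ := hf n
    exact hyf ▸ diagHom_eq_zero_iff.1 (jacobson_le_ker y hy)
  haveI := hW
  obtain ⟨G, hG⟩ : W.FG := Module.Finite.iff_fg.1 inferInstance
  choose g hg using (fun w (hw : w ∈ G) => strict_seq_kill_vec wf w f hstrict)
  refine ⟨(G.attach.sup fun p => g p.1 p.2) + 1, Nat.succ_pos _, fun w hw => ?_⟩
  have hWle : W ≤ LinearMap.ker (seqProd f ((G.attach.sup fun p => g p.1 p.2) + 1)) := by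
    rw [← hG, Submodule.span_le]
    intro x hx
    have hxG : x ∈ G := hx
    have h1 : g x hxG ≤ G.attach.sup fun p => g p.1 p.2 :=
      Finset.le_sup (f := fun p : {y : V // y ∈ G} => g p.1 p.2) (Finset.mem_attach _ ⟨x, hxG⟩)
    exact hg x hxG _ (by omega)
  exact hWle hw

end Nilp

section Forward

variable {V : Type v} [AddCommGroup V] [Module k V]

open Submodule

theorem forward_direction {ι : Type v} (lo : LinearOrder ι)
    (wf : WellFounded lo.lt) (b : Module.Basis ι k V) (R : Subalgebra k (Module.End k V))
    (htri : ∀ T ∈ (R : Set (Module.End k V)), ∀ i : ι,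
      T (b i) ∈ Submodule.span k (⇑b '' {j | lo.le j i})) :
    ∃ A : Subalgebra k (Module.End k V), R ≤ A ∧ GoodAlgebra A := by
  letI := lo
  refine ⟨triA b, fun T hT i => htri T hT i, ?_, ?_⟩
  · exact ⟨ι, diagHom b, diagHom_surjective b,
      fun x => ⟨ker_le_jacobson wf x, jacobson_le_ker x⟩,
      diagHom_continuous b, diagHom_isOpenMap b⟩
  · exact strictTri_topNilpotent wf b

end Forward
section Reverse

variable {V : Type v} [AddCommGroup V] [Module k V]

open Submodule

/-- Indicator function of a point, with value 1. -/
noncomputable def indic {Ω : Type*} (ω : Ω) : Ω → k := fun ω' => by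
  classical exact if ω' = ω then 1 else 0

theorem indic_self {Ω : Type*} (ω : Ω) : indic (k := k) ω ω = 1 := by
  simp [indic]

theorem indic_ne {Ω : Type*} {ω ω' : Ω} (h : ω' ≠ ω) : indic (k := k) ω ω' = 0 := by
  simp [indic, h]

theorem exists_eigen (A : Subalgebra k (Module.End k V)) (hA : GoodAlgebra A)
    (U : Submodule k V) (hinv : ∀ a ∈ A, ∀ v ∈ U, a v ∈ U) (hU : U ≠ ⊤) :
    ∃ v : V, v ∉ U ∧ ∀ a ∈ A, a v ∈ (span k {v}) ⊔ U := by
  obtain ⟨⟨Ω, φ, hsurj, hker, hcont, hopen⟩, hnil⟩ := hA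
  -- Step 1: find v₁ ∉ U annihilated into U by the radical
  obtain ⟨v₁, hv₁U, hv₁rad⟩ : ∃ v₁, v₁ ∉ U ∧ ∀ y : A, y ∈ Ideal.jacobson (⊥ : Ideal A) →
      (y : Module.End k V) v₁ ∈ U := by
    by_contra hcon
    push_neg at hcon
    obtain ⟨v₀, hv₀⟩ : ∃ v₀, v₀ ∉ U := by
      by_contra h; push_neg at h; exact hU (Submodule.eq_top_iff'.2 h)
    have hstep : ∀ v : V, v ∉ U → ∃ T : Module.End k V,
        (∃ y : A, y ∈ Ideal.jacobson (⊥ : Ideal A) ∧ (y : Module.End k V) = T) ∧ T v ∉ U := by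
      intro v hv
      obtain ⟨y, hy, hyv⟩ := hcon v hv
      exact ⟨(y : Module.End k V), ⟨y, hy, rfl⟩, hyv⟩
    let F : ℕ → {v : V // v ∉ U} := fun n =>
      Nat.rec ⟨v₀, hv₀⟩ (fun _ p => ⟨(hstep p.1 p.2).choose p.1,
        (hstep p.1 p.2).choose_spec.2⟩) n
    let f : ℕ → Module.End k V := fun n => (hstep (F n).1 (F n).2).choose
    have hfX : ∀ n, ∃ y : A, y ∈ Ideal.jacobson (⊥ : Ideal A) ∧ (y : Module.End k V) = f n :=
      fun n => (hstep (F n).1 (F n).2).choose_spec.1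
    have hFn : ∀ n, seqProd f n v₀ = (F n).1 := by
      intro n
      induction n with
      | zero => rfl
      | succ n IH =>
        rw [seqProd_succ, Module.End.mul_apply, IH]
    haveI : FiniteDimensional k (span k ({v₀} : Set V)) :=
      FiniteDimensional.span_of_finite k (Set.finite_singleton v₀)
    obtain ⟨n, -, hkill⟩ := hnil f hfX (span k {v₀}) inferInstance
    have h0 : seqProd f n v₀ = 0 := hkill v₀ (mem_span_singleton_self v₀)
    rw [hFn n] at h0
    exact (F n).2 (h0 ▸ U.zero_mem)
  -- Step 2: case analysis
  by_cases hcase : ∃ (ω : Ω) (a : A), φ a = indic ω ∧ (a : Module.End k V) v₁ ∉ U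
  · obtain ⟨ω, a, hφa, hav₁⟩ := hcase
    refine ⟨(a : Module.End k V) v₁, hav₁, ?_⟩
    intro c hc
    set cA : A := ⟨c, hc⟩ with hcA
    have hdiff : cA * a - (φ cA ω) • a ∈ Ideal.jacobson (⊥ : Ideal A) := by
      rw [← hker]
      rw [map_sub, map_mul, map_smul, hφa]
      funext ω'
      by_cases h : ω' = ω
      · subst h
        simp [indic_self]
      · simp [indic_ne h]
    have hrad := hv₁rad _ hdiff
    have hcoe : ((cA * a - (φ cA ω) • a : A) : Module.End k V) v₁
        = c ((a : Module.End k V) v₁) - (φ cA ω) • ((a : Module.End k V) v₁) := by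
      have h1 : ((cA * a - (φ cA ω) • a : A) : Module.End k V)
          = (cA : Module.End k V) * (a : Module.End k V)
            - (φ cA ω) • (a : Module.End k V) := by
        rw [AddSubgroupClass.coe_sub, MulMemClass.coe_mul, Subalgebra.coe_smul]
      rw [h1, LinearMap.sub_apply, LinearMap.smul_apply, Module.End.mul_apply]
    have hsplit : c ((a : Module.End k V) v₁)
        = (φ cA ω) • ((a : Module.End k V) v₁)
          + ((cA * a - (φ cA ω) • a : A) : Module.End k V) v₁ := by
      rw [hcoe]; abel
    rw [hsplit]
    exact add_mem (mem_sup_left (smul_mem _ _ (mem_span_singleton_self _)))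
      (mem_sup_right hrad)
  · push_neg at hcase
    exfalso
    -- every element with finitely supported image sends v₁ into U
    have hsingle : ∀ (ω : Ω) (a : A), φ a = indic ω → (a : Module.End k V) v₁ ∈ U := hcase
    have hfin : ∀ a : A, (Function.support (φ a)).Finite → (a : Module.End k V) v₁ ∈ U := by
      intro a hfa
      classical
      choose aω haω using (fun ω : Ω => hsurj (indic ω))
      set F : Finset Ω := hfa.toFinset with hF
      set a' : A := ∑ ω ∈ F, (φ a ω) • aω ω with ha'
      have hφa' : φ a' = φ a := by
        rw [ha', map_sum]
        funext ω'
        rw [Finset.sum_apply]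
        have hterm : ∀ ω ∈ F, (φ ((φ a ω) • aω ω)) ω'
            = if ω' = ω then φ a ω else 0 := by
          intro ω _
          rw [map_smul, haω]
          by_cases h : ω' = ω
          · subst h; simp [indic_self]
          · simp [indic_ne h, h]
        rw [Finset.sum_congr rfl hterm]
        by_cases h : ω' ∈ F
        · rw [Finset.sum_ite_eq, if_pos h]
        · rw [Finset.sum_eq_zero, eq_comm]
          · have : ω' ∉ Function.support (φ a) := by
              rw [hF] at h; simpa using h
            simpa using this
          · intro ω hω
            rw [if_neg]
            intro he
            exact h (he ▸ hω)
      have hdiff : a - a' ∈ Ideal.jacobson (⊥ : Ideal A) := by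
        rw [← hker, map_sub, hφa', sub_self]
      have hrad := hv₁rad _ hdiff
      have ha'U : ((a' : Module.End k V)) v₁ ∈ U := by
        have hcoe : (a' : Module.End k V) = ∑ ω ∈ F, (φ a ω) • ((aω ω : Module.End k V)) := by
          calc (a' : Module.End k V) = A.val a' := rfl
          _ = ∑ ω ∈ F, A.val ((φ a ω) • aω ω) := by rw [ha', map_sum]
          _ = ∑ ω ∈ F, (φ a ω) • ((aω ω : Module.End k V)) :=
            Finset.sum_congr rfl fun ω _ => by rw [map_smul]; rfl
        rw [hcoe, LinearMap.sum_apply]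
        refine Submodule.sum_mem _ fun ω _ => ?_
        rw [LinearMap.smul_apply]
        exact Submodule.smul_mem _ _ (hsingle ω (aω ω) (haω ω))
      have hcoe2 : ((a - a' : A) : Module.End k V) v₁
          = (a : Module.End k V) v₁ - (a' : Module.End k V) v₁ := by
        rw [AddSubgroupClass.coe_sub, LinearMap.sub_apply]
      have : (a : Module.End k V) v₁
          = ((a - a' : A) : Module.End k V) v₁ + (a' : Module.End k V) v₁ := by
        rw [hcoe2]; abel
      rw [this]
      exact Submodule.add_mem _ hrad ha'U
    -- topological argument: 1 is approximated by finitely supported elements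
    set C : Set A := {a : A | (a : Module.End k V) v₁ ∈ (U : Set V)} with hC
    have hCclosed : IsClosed C := closed_eval_mem (· ∈ A) v₁ U
    have h1C : (1 : A) ∉ C := by
      intro h
      exact hv₁U (by simpa [hC] using h)
    have hCco : IsOpen Cᶜ := hCclosed.isOpen_compl
    have himage : @IsOpen _ (discretePiTopology Ω k) (⇑φ '' Cᶜ) := hopen _ hCco
    have h1mem : φ 1 ∈ ⇑φ '' Cᶜ := ⟨1, h1C, rfl⟩
    obtain ⟨Fs, hFs⟩ := nbhd_basis_pi himage h1mem
    classical
    set g₀ : Ω → k := fun ω => if ω ∈ Fs then φ 1 ω else 0 with hg₀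
    have hg₀mem : g₀ ∈ {g : Ω → k | ∀ ω ∈ Fs, g ω = φ 1 ω} := fun ω hω => by
      rw [hg₀]; simp [hω]
    obtain ⟨a, haC, hφag₀⟩ := hFs hg₀mem
    refine haC (hfin a ?_)
    rw [hφag₀]
    refine Set.Finite.subset Fs.finite_toSet ?_
    intro ω hω
    by_contra h
    rw [Finset.mem_coe] at h
    apply hω
    rw [hg₀]
    simp [h]

end Reverse
section Reverse2

variable {V : Type v} [AddCommGroup V] [Module k V]

open Submodule

open Classical in
noncomputable def eigStep (A : Subalgebra k (Module.End k V)) (hA : GoodAlgebra A)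
    (U : Submodule k V) : V :=
  if h : (∀ a ∈ A, ∀ v ∈ U, a v ∈ U) ∧ U ≠ ⊤ then (exists_eigen A hA U h.1 h.2).choose else 0

noncomputable def eigSeq (A : Subalgebra k (Module.End k V)) (hA : GoodAlgebra A) :
    Ordinal.{v} → V :=
  WellFounded.fix Ordinal.lt_wf
    (fun o ih => eigStep A hA (span k (Set.range fun p : Set.Iio o => ih p.1 p.2)))

/-- The flag of submodules spanned by initial segments of `eigSeq`. -/
noncomputable def eigU (A : Subalgebra k (Module.End k V)) (hA : GoodAlgebra A)
    (o : Ordinal.{v}) : Submodule k V :=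
  span k (eigSeq A hA '' Set.Iio o)

theorem eigSeq_eq (A : Subalgebra k (Module.End k V)) (hA : GoodAlgebra A) (o : Ordinal.{v}) :
    eigSeq A hA o = eigStep A hA (eigU A hA o) := by
  rw [eigSeq, WellFounded.fix_eq]
  rw [eigU, Set.image_eq_range]
  rfl

theorem eigU_mono (A : Subalgebra k (Module.End k V)) (hA : GoodAlgebra A)
    {o o' : Ordinal.{v}} (h : o' ≤ o) : eigU A hA o' ≤ eigU A hA o :=
  span_mono (Set.image_mono (Set.Iio_subset_Iio h))

theorem eigU_inv (A : Subalgebra k (Module.End k V)) (hA : GoodAlgebra A) :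
    ∀ o : Ordinal.{v}, ∀ a ∈ A, ∀ v ∈ eigU A hA o, a v ∈ eigU A hA o := by
  intro o
  induction o using WellFounded.induction Ordinal.lt_wf with
  | _ o IH =>
  intro a ha v hv
  induction hv using span_induction with
  | mem x hx =>
    obtain ⟨o', ho', rfl⟩ := hx
    by_cases hcond : eigU A hA o' ≠ ⊤
    · have hspec := eigSeq_eq A hA o'
      rw [eigStep, dif_pos ⟨IH o' ho', hcond⟩] at hspec
      have hs := (exists_eigen A hA (eigU A hA o') (IH o' ho') hcond).choose_spec
      rw [← hspec] at hs
      have h2 := hs.2 a ha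
      have hle : span k {eigSeq A hA o'} ⊔ eigU A hA o' ≤ eigU A hA o := by
        refine sup_le ?_ (eigU_mono A hA (le_of_lt ho'))
        rw [span_le, Set.singleton_subset_iff]
        exact subset_span ⟨o', ho', rfl⟩
      exact hle h2
    · push_neg at hcond
      have hspec := eigSeq_eq A hA o'
      rw [eigStep, dif_neg (fun hcon => hcon.2 hcond)] at hspec
      rw [hspec, map_zero]
      exact zero_mem _
  | zero => rw [map_zero]; exact zero_mem _
  | add x y _ _ hx hy => rw [map_add]; exact add_mem hx hy
  | smul c x _ hx => rw [map_smul]; exact smul_mem _ c hx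

theorem eigSeq_spec (A : Subalgebra k (Module.End k V)) (hA : GoodAlgebra A)
    (o : Ordinal.{v}) (h : eigU A hA o ≠ ⊤) :
    eigSeq A hA o ∉ eigU A hA o ∧
      ∀ a ∈ A, a (eigSeq A hA o) ∈ span k {eigSeq A hA o} ⊔ eigU A hA o := by
  have hspec := eigSeq_eq A hA o
  rw [eigStep, dif_pos ⟨eigU_inv A hA o, h⟩] at hspec
  have hs := (exists_eigen A hA (eigU A hA o) (eigU_inv A hA o) h).choose_spec
  rw [← hspec] at hs
  exact hs

theorem eigU_top (A : Subalgebra k (Module.End k V)) (hA : GoodAlgebra A) :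
    ∃ o : Ordinal.{v}, eigU A hA o = ⊤ := by
  by_contra hcon
  push_neg at hcon
  have hinj : Function.Injective (eigSeq A hA) := by
    have key : ∀ o₁ o₂ : Ordinal.{v}, o₁ < o₂ → eigSeq A hA o₁ ≠ eigSeq A hA o₂ := by
      intro o₁ o₂ hlt h
      have h1 : eigSeq A hA o₁ ∈ eigU A hA o₂ := subset_span ⟨o₁, hlt, rfl⟩
      rw [h] at h1
      exact (eigSeq_spec A hA o₂ (hcon o₂)).1 h1
    intro o₁ o₂ h
    by_contra hne
    rcases Ne.lt_or_gt hne with hlt | hlt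
    · exact key o₁ o₂ hlt h
    · exact key o₂ o₁ hlt h.symm
  set c : Ordinal.{v} := (Order.succ (Cardinal.mk V)).ord with hc
  have hinj2 : Function.Injective
      (fun x : c.ToType => eigSeq A hA ((Ordinal.ToType.mk (o := c)).symm x).1) := by
    intro x y h
    have h2 := hinj h
    have h3 : (Ordinal.ToType.mk (o := c)).symm x = (Ordinal.ToType.mk (o := c)).symm y :=
      Subtype.ext h2
    exact (Ordinal.ToType.mk (o := c)).symm.injective h3
  have hle := Cardinal.mk_le_of_injective hinj2
  rw [Cardinal.mk_toType, Cardinal.card_ord] at hle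
  exact (Order.lt_succ (Cardinal.mk V)).not_ge hle

theorem reverse_direction (R A : Subalgebra k (Module.End k V)) (hRA : R ≤ A)
    (hA : GoodAlgebra A) :
    ∃ (ι : Type v) (lo : LinearOrder ι), WellFounded lo.lt ∧
      ∃ b : Module.Basis ι k V, ∀ T ∈ (R : Set (Module.End k V)), ∀ i : ι,
        T (b i) ∈ Submodule.span k (⇑b '' {j | lo.le j i}) := by
  obtain ⟨o₀, ho₀⟩ := eigU_top A hA
  set σ : Ordinal.{v} := sInf {o | eigU A hA o = ⊤} with hσdef
  have hσtop : eigU A hA σ = ⊤ := by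
    have h1 : σ ∈ {o : Ordinal.{v} | eigU A hA o = ⊤} := csInf_mem ⟨o₀, ho₀⟩
    exact h1
  have hσmin : ∀ o < σ, eigU A hA o ≠ ⊤ := by
    intro o ho
    have h1 : o ∉ {o : Ordinal.{v} | eigU A hA o = ⊤} :=
      notMem_of_lt_csInf (s := {o : Ordinal.{v} | eigU A hA o = ⊤}) ho (OrderBot.bddBelow _)
    exact h1
  set e := Ordinal.ToType.mk (o := σ) with he
  set bf : σ.ToType → V := fun x => eigSeq A hA ((e.symm x) : Ordinal.{v}) with hbf
  have hordx : ∀ x : σ.ToType, ((e.symm x) : Ordinal.{v}) < σ := fun x => (e.symm x).2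
  have hrange : Set.range bf = eigSeq A hA '' Set.Iio σ := by
    ext v
    constructor
    · rintro ⟨x, rfl⟩
      exact ⟨(e.symm x : Ordinal.{v}), hordx x, rfl⟩
    · rintro ⟨o, ho, rfl⟩
      refine ⟨e ⟨o, ho⟩, ?_⟩
      rw [hbf]
      simp only [OrderIso.symm_apply_apply]
  have hspan : span k (Set.range bf) = ⊤ := by
    rw [hrange]; exact hσtop
  have hli : LinearIndependent k bf := by
    rw [linearIndependent_iff']
    intro s gc hsum i his
    by_contra hgi
    classical
    set t := s.filter (fun j => gc j ≠ 0) with ht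
    have hine : i ∈ t := Finset.mem_filter.2 ⟨his, hgi⟩
    have hne : t.Nonempty := ⟨i, hine⟩
    set x := t.max' hne with hx
    have hxt : x ∈ t := t.max'_mem hne
    have hgx : gc x ≠ 0 := (Finset.mem_filter.1 hxt).2
    have hsum2 : ∑ j ∈ t, gc j • bf j = 0 := by
      rw [← hsum]
      refine Finset.sum_subset (Finset.filter_subset _ _) fun j hj hjt => ?_
      have hj0 : gc j = 0 := by
        by_contra h
        exact hjt (Finset.mem_filter.2 ⟨hj, h⟩)
      rw [hj0, zero_smul]
    rw [← Finset.add_sum_erase t _ hxt] at hsum2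
    have hxe : gc x • bf x = -∑ j ∈ t.erase x, gc j • bf j :=
      eq_neg_of_add_eq_zero_left hsum2
    have hmem : bf x ∈ eigU A hA ((e.symm x) : Ordinal.{v}) := by
      have hbx : bf x = (gc x)⁻¹ • (gc x • bf x) := by
        rw [smul_smul, inv_mul_cancel₀ hgx, one_smul]
      rw [hbx, hxe]
      refine Submodule.smul_mem _ _ (Submodule.neg_mem _ (Submodule.sum_mem _ fun j hj => Submodule.smul_mem _ _ ?_))
      have hjx : j < x := lt_of_le_of_ne (t.le_max' j (Finset.mem_of_mem_erase hj))
        (Finset.ne_of_mem_erase hj)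
      have hordj : ((e.symm j) : Ordinal.{v}) < ((e.symm x) : Ordinal.{v}) := by
        have : e.symm j < e.symm x := e.symm.lt_iff_lt.2 hjx
        exact this
      exact subset_span ⟨(e.symm j : Ordinal.{v}), hordj, rfl⟩
    exact (eigSeq_spec A hA _ (hσmin _ (hordx x))).1 hmem
  let b : Module.Basis σ.ToType k V := Module.Basis.mk hli (by rw [hspan])
  have hbeq : ∀ x, b x = bf x := fun x => Module.Basis.mk_apply hli _ x
  refine ⟨σ.ToType, inferInstance, (inferInstance : WellFoundedLT σ.ToType).wf, b, ?_⟩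
  intro T hT x
  have hTA : T ∈ A := hRA hT
  have hspec := (eigSeq_spec A hA ((e.symm x) : Ordinal.{v}) (hσmin _ (hordx x))).2 T hTA
  have hle : span k {eigSeq A hA ((e.symm x) : Ordinal.{v})} ⊔
      eigU A hA ((e.symm x) : Ordinal.{v}) ≤ span k (⇑b '' {j | j ≤ x}) := by
    refine sup_le ?_ ?_
    · rw [span_le, Set.singleton_subset_iff]
      refine subset_span ⟨x, le_refl x, ?_⟩
      rw [hbeq x, hbf]
    · rw [eigU, span_le]
      rintro v ⟨o', ho', rfl⟩
      have ho'σ : o' < σ := lt_trans ho' (hordx x)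
      set y := e ⟨o', ho'σ⟩ with hy
      have hyx : y < x := by
        have h1 : (⟨o', ho'σ⟩ : Set.Iio σ) < e.symm x := by
          show (⟨o', ho'σ⟩ : Set.Iio σ).1 < (e.symm x).1
          exact ho'
        have h2 : e ⟨o', ho'σ⟩ < e (e.symm x) := e.lt_iff_lt.2 h1
        rwa [OrderIso.apply_symm_apply] at h2
      refine subset_span ⟨y, le_of_lt hyx, ?_⟩
      rw [hbeq y, hbf, hy]
      simp only [OrderIso.symm_apply_apply]
  have hb2 : b x = eigSeq A hA ((e.symm x) : Ordinal.{v}) := by rw [hbeq x, hbf]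
  rw [hb2]
  exact hle hspec

end Reverse2

section Moreover

variable {V : Type v} [AddCommGroup V] [Module k V]

open Submodule

theorem left_inv_of_jacobson {S : Type*} [Ring S] {w : S}
    (hw : w ∈ Ideal.jacobson (⊥ : Ideal S)) : ∃ u : S, u * (1 - w) = 1 := by
  by_contra hcon
  push_neg at hcon
  have hne : Ideal.span {1 - w} ≠ ⊤ := by
    intro h
    rw [Ideal.eq_top_iff_one] at h
    obtain ⟨u, hu⟩ := Submodule.mem_span_singleton.1 h
    exact hcon u (by rw [← smul_eq_mul]; exact hu)
  obtain ⟨m, hmax, hle⟩ := Ideal.exists_le_maximal _ hne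
  have h1 : w ∈ m := by
    rw [Ideal.jacobson] at hw
    exact Submodule.mem_sInf.1 hw m ⟨bot_le, hmax⟩
  have h2 : 1 - w ∈ m := hle (Ideal.mem_span_singleton_self _)
  have h3 : (1 : S) ∈ m := by
    have := m.add_mem h2 h1
    rwa [sub_add_cancel] at this
  exact hmax.1.1 ((Ideal.eq_top_iff_one m).2 h3)

theorem isUnit_one_sub_of_mem_jacobson {S : Type*} [Ring S] {z : S}
    (hz : z ∈ Ideal.jacobson (⊥ : Ideal S)) : IsUnit (1 - z) := by
  obtain ⟨u, hu⟩ := left_inv_of_jacobson hz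
  have huz : u * z ∈ Ideal.jacobson (⊥ : Ideal S) := by
    rw [← smul_eq_mul]
    exact Submodule.smul_mem _ u hz
  have hu2 : u = 1 - (-(u * z)) := by
    rw [sub_neg_eq_add]
    exact eq_add_of_sub_eq (by rw [← hu, mul_sub, mul_one])
  obtain ⟨w, hw⟩ := left_inv_of_jacobson (Submodule.neg_mem _ huz)
  rw [← hu2] at hw
  have hw2 : w = 1 - z := by
    calc w = w * (u * (1 - z)) := by rw [hu, mul_one]
    _ = (w * u) * (1 - z) := by rw [mul_assoc]
    _ = 1 - z := by rw [hw, one_mul]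
  exact ⟨⟨1 - z, u, by rw [← hw2, hw], hu⟩, rfl⟩

theorem one_sub_mul_geom {S : Type*} [Ring S] (z : S) (M : ℕ) :
    (1 - z) * (∑ m ∈ Finset.range M, z ^ m) = 1 - z ^ M := by
  have h := mul_geom_sum z M
  rw [show (1 : S) - z = -(z - 1) by rw [neg_sub], neg_mul, h, neg_sub]

theorem seqProd_const (T : Module.End k V) (n : ℕ) :
    seqProd (fun _ => T) n = T ^ n := by
  induction n with
  | zero =>
    show (1 : Module.End k V) = T ^ 0
    rw [pow_zero]
  | succ n IH => rw [seqProd_succ, IH, ← pow_succ']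

theorem moreover_direction (R A : Subalgebra k (Module.End k V)) (hRA : R ≤ A)
    (hA : GoodAlgebra A) (hclosed : IsClosed (R : Set (Module.End k V))) (x : R) :
    x ∈ Ideal.jacobson (⊥ : Ideal R) ↔
      ∃ y : A, y ∈ Ideal.jacobson (⊥ : Ideal A) ∧
        (y : Module.End k V) = (x : Module.End k V) := by
  obtain ⟨⟨Ω, φ, hsurj, hker, hcont, hopen⟩, hnil⟩ := hA
  constructor
  · intro hx
    refine ⟨⟨(x : Module.End k V), hRA x.2⟩, ?_, rfl⟩
    set xA : A := ⟨(x : Module.End k V), hRA x.2⟩ with hxA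
    rw [← hker]
    by_contra hφ
    obtain ⟨ω, hω⟩ : ∃ ω, φ xA ω ≠ 0 := by
      by_contra h
      push_neg at h
      exact hφ (funext h)
    set c : k := φ xA ω with hc
    have hlinv : ∃ u : R, u * (1 - c⁻¹ • x) = 1 := by
      by_contra hcon
      push_neg at hcon
      have hne : Ideal.span {1 - c⁻¹ • x} ≠ ⊤ := by
        intro h
        rw [Ideal.eq_top_iff_one] at h
        obtain ⟨u, hu⟩ := Submodule.mem_span_singleton.1 h
        exact hcon u (by rw [← smul_eq_mul]; exact hu)
      obtain ⟨m, hmax, hle⟩ := Ideal.exists_le_maximal _ hne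
      have h1 : x ∈ m := by
        rw [Ideal.jacobson] at hx
        exact Submodule.mem_sInf.1 hx m ⟨bot_le, hmax⟩
      have h2 : 1 - c⁻¹ • x ∈ m := hle (Ideal.mem_span_singleton_self _)
      have h3 : c⁻¹ • x ∈ m := by
        rw [Algebra.smul_def, ← smul_eq_mul]
        exact Submodule.smul_mem _ _ h1
      have h4 : (1 : R) ∈ m := by
        have := m.add_mem h2 h3
        rwa [sub_add_cancel] at this
      exact hmax.1.1 ((Ideal.eq_top_iff_one m).2 h4)
    obtain ⟨u, hu⟩ := hlinv
    have hu' : (u : Module.End k V) * (1 - c⁻¹ • (x : Module.End k V)) = 1 := by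
      have h := congrArg (Subtype.val : R → Module.End k V) hu
      push_cast at h
      exact h
    have hAeq : (⟨(u : Module.End k V), hRA u.2⟩ : A) * (1 - c⁻¹ • xA) = 1 := by
      apply Subtype.ext
      push_cast
      exact hu'
    have hφeq := congrArg (fun z : A => φ z ω) hAeq
    simp only [map_mul, map_sub, map_smul, map_one, Pi.mul_apply, Pi.sub_apply,
      Pi.smul_apply, Pi.one_apply, smul_eq_mul] at hφeq
    rw [← hc, inv_mul_cancel₀ hω, sub_self, mul_zero] at hφeq
    exact zero_ne_one hφeq
  · rintro ⟨y, hy, hyx⟩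
    rw [Ideal.jacobson, Submodule.mem_sInf]
    rintro m ⟨-, hmax⟩
    by_contra hxm
    have hlt : m < m ⊔ Ideal.span {x} := by
      refine lt_of_le_of_ne le_sup_left fun h => hxm ?_
      rw [h]
      exact Submodule.mem_sup_right (Ideal.mem_span_singleton_self x)
    have htop : m ⊔ Ideal.span {x} = ⊤ := hmax.1.2 _ hlt
    have h1 : (1 : R) ∈ m ⊔ Ideal.span {x} := htop ▸ trivial
    obtain ⟨mu, hmu, w, hw, hmuw⟩ := Submodule.mem_sup.1 h1
    obtain ⟨a, rfl⟩ := Ideal.mem_span_singleton'.1 hw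
    -- the element a * x, viewed in A
    set aA : A := ⟨(a : Module.End k V), hRA a.2⟩ with haA
    set z : A := aA * y with hz
    have hzmem : z ∈ Ideal.jacobson (⊥ : Ideal A) := by
      rw [hz, ← smul_eq_mul]
      exact Submodule.smul_mem _ aA hy
    have hzcoe : (z : Module.End k V) = ((a * x : R) : Module.End k V) := by
      rw [hz]
      push_cast
      rw [hyx]
    have hunit : IsUnit (1 - z) := isUnit_one_sub_of_mem_jacobson hzmem
    obtain ⟨uu, huu⟩ := hunit
    have hinv1 : (uu.inv : A) * (1 - z) = 1 := by rw [← huu]; exact uu.inv_val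
    have hinv2 : (1 - z) * (uu.inv : A) = 1 := by rw [← huu]; exact uu.val_inv
    have hA1 : ((uu.inv : A) : Module.End k V) * (1 - (z : Module.End k V)) = 1 := by
      have h := congrArg (Subtype.val : A → Module.End k V) hinv1
      push_cast at h
      exact h
    have hA2 : (1 - (z : Module.End k V)) * ((uu.inv : A) : Module.End k V) = 1 := by
      have h := congrArg (Subtype.val : A → Module.End k V) hinv2
      push_cast at h
      exact h
    set uE : Module.End k V := ((uu.inv : A) : Module.End k V) with huE
    have huE_mem : uE ∈ (R : Set (Module.End k V)) := by
      have hcl : uE ∈ closure (R : Set (Module.End k V)) := by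
        rw [_root_.mem_closure_iff]
        intro O hO hOu
        obtain ⟨I, hI⟩ := nbhd_basis_end hO hOu
        haveI : FiniteDimensional k (span k (I : Set V)) :=
          FiniteDimensional.span_of_finite k I.finite_toSet
        obtain ⟨n, hn0, hkill⟩ := hnil (fun _ => (z : Module.End k V))
          (fun _ => ⟨z, hzmem, rfl⟩) (span k (I : Set V)) inferInstance
        set sR : R := ∑ m ∈ Finset.range n, (a * x) ^ m with hsR
        have hsRcoe : (sR : Module.End k V)
            = ∑ m ∈ Finset.range n, (z : Module.End k V) ^ m := by
          calc (sR : Module.End k V) = R.val sR := rfl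
          _ = ∑ m ∈ Finset.range n, R.val ((a * x) ^ m) := by rw [hsR, map_sum]
          _ = ∑ m ∈ Finset.range n, (z : Module.End k V) ^ m := by
            refine Finset.sum_congr rfl fun m _ => ?_
            rw [map_pow]
            rw [show R.val (a * x) = (z : Module.End k V) from hzcoe.symm]
        refine ⟨(sR : Module.End k V), hI fun v hv => ?_, sR.2⟩
        have hvW : v ∈ span k (I : Set V) := subset_span hv
        have hzn : ((z : Module.End k V) ^ n) v = 0 := by
          have h := hkill v hvW
          rwa [seqProd_const] at h
        have hgeom := one_sub_mul_geom (z : Module.End k V) n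
        have h1 : v = ((1 - (z : Module.End k V))
            * (∑ m ∈ Finset.range n, (z : Module.End k V) ^ m)) v
            + ((z : Module.End k V) ^ n) v := by
          rw [hgeom, LinearMap.sub_apply, Module.End.one_apply]
          abel
        have step : uE v = (sR : Module.End k V) v := by
          calc uE v = uE (((1 - (z : Module.End k V))
              * (∑ m ∈ Finset.range n, (z : Module.End k V) ^ m)) v
              + ((z : Module.End k V) ^ n) v) := congrArg uE h1
          _ = uE (((1 - (z : Module.End k V))
              * (∑ m ∈ Finset.range n, (z : Module.End k V) ^ m)) v) + uE 0 := by
            rw [map_add, hzn]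
          _ = ((uE * ((1 - (z : Module.End k V))
              * (∑ m ∈ Finset.range n, (z : Module.End k V) ^ m))) v) := by
            rw [map_zero, add_zero]
            rfl
          _ = ((uE * (1 - (z : Module.End k V)))
              * (∑ m ∈ Finset.range n, (z : Module.End k V) ^ m)) v := by
            rw [mul_assoc]
          _ = (sR : Module.End k V) v := by
            rw [huE, hA1, one_mul, hsRcoe]
        exact step.symm
      rwa [hclosed.closure_eq] at hcl
    have hunitR : IsUnit (1 - a * x : R) := by
      have hRcoe : ((1 - a * x : R) : Module.End k V) = 1 - (z : Module.End k V) := by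
        rw [AddSubgroupClass.coe_sub, OneMemClass.coe_one, ← hzcoe]
      refine ⟨⟨1 - a * x, ⟨uE, huE_mem⟩, ?_, ?_⟩, rfl⟩
      · apply Subtype.ext
        rw [MulMemClass.coe_mul, OneMemClass.coe_one]
        show ((1 - a * x : R) : Module.End k V) * uE = 1
        rw [hRcoe]
        exact hA2
      · apply Subtype.ext
        rw [MulMemClass.coe_mul, OneMemClass.coe_one]
        show uE * ((1 - a * x : R) : Module.End k V) = 1
        rw [hRcoe]
        exact hA1
    have hmu1 : mu = 1 - a * x := by
      rw [← hmuw]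
      exact (add_sub_cancel_right mu (a * x)).symm
    exact hmax.1.1 (Ideal.eq_top_of_isUnit_mem m hmu (hmu1 ▸ hunitR))
  
end Moreover


/-- a unital `k`-subalgebra `R` of `End_k(V)` is triangularizable iff it is
contained in a unital `k`-subalgebra `A` with `A/rad(A) ≅ k^Ω` as topological `k`-algebras
for some set `Ω` and `rad(A)` topologically nilpotent; moreover, if such an `A` exists and
`R` is closed in the function topology, then `rad(R) = R ∩ rad(A)`. -/
theorem stmt_17 {V : Type v} [AddCommGroup V] [Module k V] [Nontrivial V]
    (R : Subalgebra k (Module.End k V)) :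
    ((∃ (ι : Type v) (lo : LinearOrder ι), WellFounded lo.lt ∧
      ∃ b : Module.Basis ι k V, ∀ T ∈ (R : Set (Module.End k V)), ∀ i : ι,
        T (b i) ∈ Submodule.span k (⇑b '' {j | lo.le j i})) ↔
      ∃ A : Subalgebra k (Module.End k V), R ≤ A ∧ GoodAlgebra A) ∧
    (IsClosed (R : Set (Module.End k V)) →
      ∀ A : Subalgebra k (Module.End k V), R ≤ A → GoodAlgebra A →
        ∀ x : R, x ∈ Ideal.jacobson (⊥ : Ideal R) ↔
          ∃ y : A, y ∈ Ideal.jacobson (⊥ : Ideal A) ∧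
            (y : Module.End k V) = (x : Module.End k V)) := by
  constructor
  · constructor
    · rintro ⟨ι, lo, hwf, b, htri⟩
      exact forward_direction lo hwf b R htri
    · rintro ⟨A, hRA, hA⟩
      exact reverse_direction R A hRA hA
  · intro hclosed A hRA hA x
    exact moreover_direction R A hRA hA hclosed x
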